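/- Consider the adherence-aware MDP with effective policy π_eff(π,θ) = θπ + (1-θ)π_base, and define the robust problem V_rob = max over stationary policies π of min over θ' ∈ [θ_lo, θ_hi] of R(π_eff(π,θ')). Then V_rob = max over stationary π of R(π_eff(π, θ_lo)); that is, the worst case over the uncertainty interval is always attained at the lowest adherence level θ_lo, and the pair (π*_alg(θ_lo), θ_lo) is a saddle point. -/

import Mathlib

open scoped BigOperators
open Matrix

set_option linter.unusedSectionVars false
set_option linter.unusedVariables false

/-- Markov matrix induced by a stationary policy. -/
noncomputable def mdpM {S A : Type*} [Fintype S] [Fintype A]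
    (P : S → A → S → ℝ) (π : S → A → ℝ) : Matrix S S ℝ :=
  fun s s' => ∑ a, π s a * P s a s'

/-- Expected instantaneous reward under a stationary policy. -/
noncomputable def mdpr {S A : Type*} [Fintype S] [Fintype A]
    (P : S → A → S → ℝ) (r : S → A → S → ℝ) (π : S → A → ℝ) : S → ℝ :=
  fun s => ∑ a, π s a * ∑ s', P s a s' * r s a s'

/-- Expected discounted return of a stationary policy from initial distribution `p0`. -/
noncomputable def Ret {S A : Type*} [Fintype S] [Fintype A] [DecidableEq S]
    (lam : ℝ) (P : S → A → S → ℝ) (r : S → A → S → ℝ) (p0 : S → ℝ)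
    (π : S → A → ℝ) : ℝ :=
  ∑' t : ℕ, lam ^ t * ∑ s, p0 s * ((mdpM P π ^ t) *ᵥ (mdpr P r π)) s

namespace Stmt17A


variable {S : Type*} [Fintype S] [DecidableEq S] [Nonempty S]

def Stoch (M : Matrix S S ℝ) : Prop := (∀ s s', 0 ≤ M s s') ∧ ∀ s, ∑ s', M s s' = 1

lemma Stoch.one : Stoch (1 : Matrix S S ℝ) := by
  constructor
  · intro s s'
    by_cases h : s = s' <;> simp [Matrix.one_apply, h]
  · intro s; simp [Matrix.one_apply]

lemma Stoch.mul {M N : Matrix S S ℝ} (hM : Stoch M) (hN : Stoch N) : Stoch (M * N) := by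
  constructor
  · intro s s'
    rw [Matrix.mul_apply]
    exact Finset.sum_nonneg fun k _ => mul_nonneg (hM.1 s k) (hN.1 k s')
  · intro s
    simp only [Matrix.mul_apply]
    rw [Finset.sum_comm]
    simp only [← Finset.mul_sum]
    simp [hN.2, hM.2 s]

lemma Stoch.pow {M : Matrix S S ℝ} (hM : Stoch M) (n : ℕ) : Stoch (M ^ n) := by
  induction n with
  | zero => simpa using Stoch.one
  | succ n ih => rw [pow_succ]; exact ih.mul hM

lemma mulVec_apply (M : Matrix S S ℝ) (v : S → ℝ) (s : S) :
    (M *ᵥ v) s = ∑ s', M s s' * v s' := by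
  simp [Matrix.mulVec, dotProduct]

lemma Stoch.mulVec_le_of {M : Matrix S S ℝ} (hM : Stoch M) {v : S → ℝ} {c : ℝ}
    (hv : ∀ s, c ≤ v s) (s : S) : c ≤ (M *ᵥ v) s := by
  rw [mulVec_apply]
  calc c = ∑ s', M s s' * c := by rw [← Finset.sum_mul, hM.2 s, one_mul]
    _ ≤ ∑ s', M s s' * v s' :=
      Finset.sum_le_sum fun s' _ => mul_le_mul_of_nonneg_left (hv s') (hM.1 s s')

lemma Stoch.mulVec_abs_le {M : Matrix S S ℝ} (hM : Stoch M) {v : S → ℝ} {B : ℝ}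
    (hv : ∀ s, |v s| ≤ B) (s : S) : |(M *ᵥ v) s| ≤ B := by
  rw [mulVec_apply]
  calc |∑ s', M s s' * v s'| ≤ ∑ s', |M s s' * v s'| := Finset.abs_sum_le_sum_abs _ _
    _ ≤ ∑ s', M s s' * B := by
        refine Finset.sum_le_sum fun s' _ => ?_
        rw [abs_mul, abs_of_nonneg (hM.1 s s')]
        exact mul_le_mul_of_nonneg_left (hv s') (hM.1 s s')
    _ = B := by rw [← Finset.sum_mul, hM.2 s, one_mul]

noncomputable def val (lam : ℝ) (M : Matrix S S ℝ) (ρ : S → ℝ) : S → ℝ :=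
  fun s => ∑' t : ℕ, lam ^ t * ((M ^ t) *ᵥ ρ) s

lemma term_bound {lam : ℝ} (hl0 : 0 ≤ lam) {M : Matrix S S ℝ} (hM : Stoch M)
    {ρ : S → ℝ} {B : ℝ} (hρ : ∀ s, |ρ s| ≤ B) (t : ℕ) (s : S) :
    |lam ^ t * ((M ^ t) *ᵥ ρ) s| ≤ lam ^ t * B := by
  rw [abs_mul, abs_pow, abs_of_nonneg hl0]
  exact mul_le_mul_of_nonneg_left ((hM.pow t).mulVec_abs_le hρ s) (pow_nonneg hl0 t)

lemma summable_aux {lam : ℝ} (hl0 : 0 ≤ lam) (hl1 : lam < 1) {f : ℕ → ℝ} {B : ℝ}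
    (hf : ∀ t, |f t| ≤ lam ^ t * B) : Summable f :=
  summable_abs_iff.mp (Summable.of_nonneg_of_le (fun t => abs_nonneg _) hf
    ((summable_geometric_of_lt_one hl0 hl1).mul_right B))

lemma summable_val {lam : ℝ} (hl0 : 0 ≤ lam) (hl1 : lam < 1) {M : Matrix S S ℝ}
    (hM : Stoch M) {ρ : S → ℝ} {B : ℝ} (hρ : ∀ s, |ρ s| ≤ B) (s : S) :
    Summable (fun t : ℕ => lam ^ t * ((M ^ t) *ᵥ ρ) s) :=
  summable_aux hl0 hl1 (fun t => term_bound hl0 hM hρ t s)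

lemma val_lb {lam : ℝ} (hl0 : 0 ≤ lam) (hl1 : lam < 1) {M : Matrix S S ℝ}
    (hM : Stoch M) {ρ : S → ℝ} {B : ℝ} (hρ : ∀ s, |ρ s| ≤ B) (s : S) :
    -((1 - lam)⁻¹ * B) ≤ val lam M ρ s := by
  have hs := summable_val hl0 hl1 hM hρ s
  have hg : Summable (fun t : ℕ => lam ^ t * B) :=
    (summable_geometric_of_lt_one hl0 hl1).mul_right B
  have h1 : ∀ t : ℕ, -(lam ^ t * B) ≤ lam ^ t * ((M ^ t) *ᵥ ρ) s := by
    intro t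
    have := term_bound hl0 hM hρ t s
    have := abs_le.mp this
    linarith [this.1]
  have h2 : ∑' t : ℕ, -(lam ^ t * B) ≤ val lam M ρ s := Summable.tsum_le_tsum h1 hg.neg hs
  calc -((1 - lam)⁻¹ * B) = ∑' t : ℕ, -(lam ^ t * B) := by
        rw [tsum_neg, tsum_mul_right, tsum_geometric_of_lt_one hl0 hl1]
    _ ≤ _ := h2

lemma val_fix {lam : ℝ} (hl0 : 0 ≤ lam) (hl1 : lam < 1) {M : Matrix S S ℝ}
    (hM : Stoch M) {ρ : S → ℝ} {B : ℝ} (hρ : ∀ s, |ρ s| ≤ B) (s : S) :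
    val lam M ρ s = ρ s + lam * (M *ᵥ val lam M ρ) s := by
  have hs := summable_val hl0 hl1 hM hρ
  have key : ∀ t : ℕ, lam ^ (t+1) * ((M ^ (t+1)) *ᵥ ρ) s
      = lam * ∑ s', M s s' * (lam ^ t * ((M ^ t) *ᵥ ρ) s') := by
    intro t
    rw [show (M ^ (t+1)) = M * M ^ t from pow_succ' M t, ← Matrix.mulVec_mulVec,
      mulVec_apply, pow_succ, Finset.mul_sum, Finset.mul_sum]
    refine Finset.sum_congr rfl fun s' _ => by ring
  calc val lam M ρ s
      = lam ^ 0 * ((M ^ 0) *ᵥ ρ) s + ∑' t : ℕ, lam ^ (t+1) * ((M ^ (t+1)) *ᵥ ρ) s :=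
        Summable.tsum_eq_zero_add (hs s)
    _ = ρ s + ∑' t : ℕ, lam * ∑ s', M s s' * (lam ^ t * ((M ^ t) *ᵥ ρ) s') := by
        simp only [pow_zero, one_mul, Matrix.one_mulVec, key]
    _ = ρ s + lam * ∑ s', ∑' t : ℕ, M s s' * (lam ^ t * ((M ^ t) *ᵥ ρ) s') := by
        rw [tsum_mul_left, Summable.tsum_finsetSum fun s' _ => (hs s').mul_left _]
    _ = ρ s + lam * (M *ᵥ val lam M ρ) s := by
        rw [mulVec_apply]
        congr 1
        refine congrArg _ (Finset.sum_congr rfl fun s' _ => ?_)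
        rw [tsum_mul_left]
        rfl

lemma nonneg_of {lam : ℝ} (hl0 : 0 ≤ lam) (hl1 : lam < 1) {M : Matrix S S ℝ}
    (hM : Stoch M) (u : S → ℝ) (h : ∀ s, lam * (M *ᵥ u) s ≤ u s) : ∀ s, 0 ≤ u s := by
  obtain ⟨s0, -, hmin⟩ := Finset.exists_min_image Finset.univ u Finset.univ_nonempty
  have h1 : u s0 ≤ (M *ᵥ u) s0 := hM.mulVec_le_of (fun s => hmin s (Finset.mem_univ s)) s0
  have h2 : lam * u s0 ≤ u s0 :=
    le_trans (mul_le_mul_of_nonneg_left h1 hl0) (h s0)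
  have h3 : 0 ≤ u s0 := by nlinarith
  exact fun s => le_trans h3 (hmin s (Finset.mem_univ s))

lemma le_val {lam : ℝ} (hl0 : 0 ≤ lam) (hl1 : lam < 1) {M : Matrix S S ℝ}
    (hM : Stoch M) {ρ : S → ℝ} {B : ℝ} (hρ : ∀ s, |ρ s| ≤ B) (w : S → ℝ)
    (hw : ∀ s, w s ≤ ρ s + lam * (M *ᵥ w) s) : ∀ s, w s ≤ val lam M ρ s := by
  have key : ∀ s, lam * (M *ᵥ (val lam M ρ - w)) s ≤ (val lam M ρ - w) s := by
    intro s
    rw [Matrix.mulVec_sub]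
    have h1 := val_fix hl0 hl1 hM hρ s
    have h2 := hw s
    simp only [Pi.sub_apply]
    linarith
  have := nonneg_of hl0 hl1 hM _ key
  intro s
  have := this s
  simp only [Pi.sub_apply] at this
  linarith

lemma val_le {lam : ℝ} (hl0 : 0 ≤ lam) (hl1 : lam < 1) {M : Matrix S S ℝ}
    (hM : Stoch M) {ρ : S → ℝ} {B : ℝ} (hρ : ∀ s, |ρ s| ≤ B) (w : S → ℝ)
    (hw : ∀ s, ρ s + lam * (M *ᵥ w) s ≤ w s) : ∀ s, val lam M ρ s ≤ w s := by
  have key : ∀ s, lam * (M *ᵥ (w - val lam M ρ)) s ≤ (w - val lam M ρ) s := by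
    intro s
    rw [Matrix.mulVec_sub]
    have h1 := val_fix hl0 hl1 hM hρ s
    have h2 := hw s
    simp only [Pi.sub_apply]
    linarith
  have := nonneg_of hl0 hl1 hM _ key
  intro s
  have := this s
  simp only [Pi.sub_apply] at this
  linarith

end Stmt17A
section Part2
open Stmt17A
variable {S A : Type*} [Fintype S] [Fintype A] [DecidableEq S] [Nonempty S] [Nonempty A]
variable {lam : ℝ} {P : S → A → S → ℝ} {r : S → A → S → ℝ} {πb : S → A → ℝ}

lemma stoch_mdpM (hP : ∀ s a, P s a ∈ stdSimplex ℝ S) {π : S → A → ℝ}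
    (hπ : ∀ s, π s ∈ stdSimplex ℝ A) : Stoch (mdpM P π) := by
  constructor
  · intro s s'
    exact Finset.sum_nonneg fun a _ => mul_nonneg ((hπ s).1 a) ((hP s a).1 s')
  · intro s
    simp only [mdpM]
    rw [Finset.sum_comm]
    simp only [← Finset.mul_sum]
    have : ∀ a : A, π s a * ∑ s', P s a s' = π s a := fun a => by rw [(hP s a).2, mul_one]
    simp only [this]
    exact (hπ s).2

/-- A uniform bound for rewards. -/
noncomputable def rbd (r : S → A → S → ℝ) : ℝ := ∑ s, ∑ a, ∑ s', |r s a s'|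

lemma rbd_nonneg (r : S → A → S → ℝ) : 0 ≤ rbd r :=
  Finset.sum_nonneg fun _ _ => Finset.sum_nonneg fun _ _ => Finset.sum_nonneg fun _ _ => abs_nonneg _

lemma inner_abs_le (hP : ∀ s a, P s a ∈ stdSimplex ℝ S) (s : S) (a : A) :
    |∑ s', P s a s' * r s a s'| ≤ rbd r := by
  have hP1 : ∀ s', P s a s' ≤ 1 := by
    intro s'
    calc P s a s' ≤ ∑ s'', P s a s'' :=
          Finset.single_le_sum (fun i _ => (hP s a).1 i) (Finset.mem_univ s')
      _ = 1 := (hP s a).2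
  calc |∑ s', P s a s' * r s a s'| ≤ ∑ s', |P s a s' * r s a s'| := Finset.abs_sum_le_sum_abs _ _
    _ ≤ ∑ s', |r s a s'| := by
        refine Finset.sum_le_sum fun s' _ => ?_
        rw [abs_mul, abs_of_nonneg ((hP s a).1 s')]
        calc P s a s' * |r s a s'| ≤ 1 * |r s a s'| :=
              mul_le_mul_of_nonneg_right (hP1 s') (abs_nonneg _)
          _ = |r s a s'| := one_mul _
    _ ≤ rbd r := by
        refine le_trans (Finset.single_le_sum (f := fun a => ∑ s', |r s a s'|)
          (fun i _ => Finset.sum_nonneg fun _ _ => abs_nonneg _) (Finset.mem_univ a)) ?_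
        exact Finset.single_le_sum (f := fun s => ∑ a, ∑ s', |r s a s'|)
          (fun i _ => Finset.sum_nonneg fun _ _ => Finset.sum_nonneg fun _ _ => abs_nonneg _)
          (Finset.mem_univ s)

lemma mdpr_abs_le (hP : ∀ s a, P s a ∈ stdSimplex ℝ S) {π : S → A → ℝ}
    (hπ : ∀ s, π s ∈ stdSimplex ℝ A) (s : S) : |mdpr P r π s| ≤ rbd r := by
  simp only [mdpr]
  calc |∑ a, π s a * ∑ s', P s a s' * r s a s'| ≤ ∑ a, |π s a * ∑ s', P s a s' * r s a s'| :=
        Finset.abs_sum_le_sum_abs _ _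
    _ ≤ ∑ a, π s a * rbd r := by
        refine Finset.sum_le_sum fun a _ => ?_
        rw [abs_mul, abs_of_nonneg ((hπ s).1 a)]
        exact mul_le_mul_of_nonneg_left (inner_abs_le hP s a) ((hπ s).1 a)
    _ = rbd r := by rw [← Finset.sum_mul, (hπ s).2, one_mul]

/-- Value function of a stationary policy. -/
noncomputable def Vp (lam : ℝ) (P : S → A → S → ℝ) (r : S → A → S → ℝ) (π : S → A → ℝ) : S → ℝ :=
  val lam (mdpM P π) (mdpr P r π)

/-- One-step Bellman operator of a stationary policy. -/
noncomputable def Tpol (lam : ℝ) (P : S → A → S → ℝ) (r : S → A → S → ℝ)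
    (π : S → A → ℝ) (w : S → ℝ) (s : S) : ℝ :=
  mdpr P r π s + lam * (mdpM P π *ᵥ w) s

/-- One-step Bellman operator of a single action. -/
noncomputable def Tdet (lam : ℝ) (P : S → A → S → ℝ) (r : S → A → S → ℝ)
    (a : A) (w : S → ℝ) (s : S) : ℝ :=
  (∑ s', P s a s' * r s a s') + lam * ∑ s', P s a s' * w s'

lemma mdpM_mulVec (π : S → A → ℝ) (w : S → ℝ) (s : S) :
    (mdpM P π *ᵥ w) s = ∑ a, π s a * ∑ s', P s a s' * w s' := by
  rw [Stmt17A.mulVec_apply]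
  simp only [mdpM, Finset.sum_mul, Finset.mul_sum]
  rw [Finset.sum_comm]
  exact Finset.sum_congr rfl fun a _ => Finset.sum_congr rfl fun s' _ => by ring

lemma Tpol_eq_sum (π : S → A → ℝ) (w : S → ℝ) (s : S) :
    Tpol lam P r π w s = ∑ a, π s a * Tdet lam P r a w s := by
  simp only [Tpol, Tdet, mdpr, mdpM_mulVec, Finset.mul_sum, mul_add]
  rw [← Finset.sum_add_distrib]
  exact Finset.sum_congr rfl fun a _ => by ring

lemma Tpol_convex (θ : ℝ) (π : S → A → ℝ) (w : S → ℝ) (s : S) :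
    Tpol lam P r (fun s a => θ * π s a + (1 - θ) * πb s a) w s
      = θ * Tpol lam P r π w s + (1 - θ) * Tpol lam P r πb w s := by
  simp only [Tpol_eq_sum, add_mul, Finset.sum_add_distrib, Finset.mul_sum]
  congr 1 <;> exact Finset.sum_congr rfl fun a _ => by ring

lemma Tpol_mono (hP : ∀ s a, P s a ∈ stdSimplex ℝ S) (hl0 : 0 ≤ lam) {π : S → A → ℝ}
    (hπ : ∀ s, π s ∈ stdSimplex ℝ A) {w w' : S → ℝ} (hww : ∀ s, w s ≤ w' s) (s : S) :
    Tpol lam P r π w s ≤ Tpol lam P r π w' s := by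
  simp only [Tpol]
  have hM := stoch_mdpM hP hπ
  have : (mdpM P π *ᵥ w) s ≤ (mdpM P π *ᵥ w') s := by
    rw [Stmt17A.mulVec_apply, Stmt17A.mulVec_apply]
    exact Finset.sum_le_sum fun s' _ => mul_le_mul_of_nonneg_left (hww s') (hM.1 s s')
  nlinarith [mul_le_mul_of_nonneg_left this hl0]

lemma Vp_fix (hl0 : 0 ≤ lam) (hl1 : lam < 1) (hP : ∀ s a, P s a ∈ stdSimplex ℝ S)
    {π : S → A → ℝ} (hπ : ∀ s, π s ∈ stdSimplex ℝ A) (s : S) :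
    Vp lam P r π s = Tpol lam P r π (Vp lam P r π) s :=
  val_fix hl0 hl1 (stoch_mdpM hP hπ) (mdpr_abs_le hP hπ) s

lemma Vp_le (hl0 : 0 ≤ lam) (hl1 : lam < 1) (hP : ∀ s a, P s a ∈ stdSimplex ℝ S)
    {π : S → A → ℝ} (hπ : ∀ s, π s ∈ stdSimplex ℝ A) (w : S → ℝ)
    (hw : ∀ s, Tpol lam P r π w s ≤ w s) : ∀ s, Vp lam P r π s ≤ w s :=
  val_le hl0 hl1 (stoch_mdpM hP hπ) (mdpr_abs_le hP hπ) w hw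

lemma le_Vp (hl0 : 0 ≤ lam) (hl1 : lam < 1) (hP : ∀ s a, P s a ∈ stdSimplex ℝ S)
    {π : S → A → ℝ} (hπ : ∀ s, π s ∈ stdSimplex ℝ A) (w : S → ℝ)
    (hw : ∀ s, w s ≤ Tpol lam P r π w s) : ∀ s, w s ≤ Vp lam P r π s :=
  le_val hl0 hl1 (stoch_mdpM hP hπ) (mdpr_abs_le hP hπ) w hw

lemma Ret_eq_val (hl0 : 0 ≤ lam) (hl1 : lam < 1) (hP : ∀ s a, P s a ∈ stdSimplex ℝ S)
    (p0 : S → ℝ) {π : S → A → ℝ} (hπ : ∀ s, π s ∈ stdSimplex ℝ A) :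
    Ret lam P r p0 π = ∑ s, p0 s * Vp lam P r π s := by
  have hs := summable_val hl0 hl1 (stoch_mdpM hP hπ) (mdpr_abs_le (r := r) hP hπ)
  calc Ret lam P r p0 π
      = ∑' t : ℕ, ∑ s, p0 s * (lam ^ t * ((mdpM P π ^ t) *ᵥ mdpr P r π) s) := by
        unfold Ret
        refine tsum_congr fun t => ?_
        rw [Finset.mul_sum]
        exact Finset.sum_congr rfl fun s _ => by ring
    _ = ∑ s, ∑' t : ℕ, p0 s * (lam ^ t * ((mdpM P π ^ t) *ᵥ mdpr P r π) s) :=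
        Summable.tsum_finsetSum fun s _ => (hs s).mul_left _
    _ = ∑ s, p0 s * Vp lam P r π s := by
        refine Finset.sum_congr rfl fun s _ => ?_
        rw [tsum_mul_left]
        rfl

lemma Ret_mono (hl0 : 0 ≤ lam) (hl1 : lam < 1) (hP : ∀ s a, P s a ∈ stdSimplex ℝ S)
    {p0 : S → ℝ} (hp0 : p0 ∈ stdSimplex ℝ S) {π π' : S → A → ℝ}
    (hπ : ∀ s, π s ∈ stdSimplex ℝ A) (hπ' : ∀ s, π' s ∈ stdSimplex ℝ A)
    (h : ∀ s, Vp lam P r π s ≤ Vp lam P r π' s) :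
    Ret lam P r p0 π ≤ Ret lam P r p0 π' := by
  rw [Ret_eq_val hl0 hl1 hP p0 hπ, Ret_eq_val hl0 hl1 hP p0 hπ']
  exact Finset.sum_le_sum fun s _ => mul_le_mul_of_nonneg_left (h s) (hp0.1 s)

lemma Ret_lb (hl0 : 0 ≤ lam) (hl1 : lam < 1) (hP : ∀ s a, P s a ∈ stdSimplex ℝ S)
    {p0 : S → ℝ} (hp0 : p0 ∈ stdSimplex ℝ S) {π : S → A → ℝ}
    (hπ : ∀ s, π s ∈ stdSimplex ℝ A) :
    -((1 - lam)⁻¹ * rbd r) ≤ Ret lam P r p0 π := by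
  rw [Ret_eq_val hl0 hl1 hP p0 hπ]
  have hv : ∀ s, -((1 - lam)⁻¹ * rbd r) ≤ Vp lam P r π s := fun s =>
    val_lb hl0 hl1 (stoch_mdpM hP hπ) (mdpr_abs_le hP hπ) s
  calc -((1 - lam)⁻¹ * rbd r) = ∑ s, p0 s * -((1 - lam)⁻¹ * rbd r) := by
        rw [← Finset.sum_mul, hp0.2, one_mul]
    _ ≤ ∑ s, p0 s * Vp lam P r π s :=
        Finset.sum_le_sum fun s _ => mul_le_mul_of_nonneg_left (hv s) (hp0.1 s)

lemma eff_mem {θ : ℝ} (hθ0 : 0 ≤ θ) (hθ1 : θ ≤ 1) {π : S → A → ℝ}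
    (hπ : ∀ s, π s ∈ stdSimplex ℝ A) (hπb : ∀ s, πb s ∈ stdSimplex ℝ A) (s : S) :
    (fun a => θ * π s a + (1 - θ) * πb s a) ∈ stdSimplex ℝ A := by
  constructor
  · intro a
    have h1 := (hπ s).1 a
    have h2 := (hπb s).1 a
    dsimp only
    nlinarith
  · rw [Finset.sum_add_distrib, ← Finset.mul_sum, ← Finset.mul_sum, (hπ s).2, (hπb s).2]
    ring

end Part2
section Part3
open Stmt17A
variable {S A : Type*} [Fintype S] [Fintype A] [DecidableEq S] [Nonempty S] [Nonempty A]

/-- Deterministic policy as a stochastic one. -/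
noncomputable def ind (d : S → A) : S → A → ℝ := by
  classical exact fun s a => if a = d s then 1 else 0

lemma ind_mem (d : S → A) (s : S) : ind d s ∈ stdSimplex ℝ A := by
  classical
  constructor
  · intro a
    simp only [ind]
    split <;> norm_num
  · simp [ind]

lemma Tpol_ind {lam : ℝ} {P : S → A → S → ℝ} {r : S → A → S → ℝ}
    (d : S → A) (w : S → ℝ) (s : S) :
    Tpol lam P r (ind d) w s = Tdet lam P r (d s) w s := by
  classical
  rw [Tpol_eq_sum]
  simp [ind, ite_mul]

/-- Main auxiliary result: existence of an optimal recommendation at `θlo`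
which is monotone in the adherence level. -/
theorem auxmain {lam : ℝ} (hl0 : 0 ≤ lam) (hl1 : lam < 1)
    {P : S → A → S → ℝ} (hP : ∀ s a, P s a ∈ stdSimplex ℝ S)
    (r : S → A → S → ℝ)
    {p0 : S → ℝ} (hp0 : p0 ∈ stdSimplex ℝ S)
    {πb : S → A → ℝ} (hπb : ∀ s, πb s ∈ stdSimplex ℝ A)
    {θlo θhi : ℝ} (hθlo : θlo ∈ Set.Icc (0:ℝ) 1) (hθhi : θhi ∈ Set.Icc (0:ℝ) 1)
    (hle : θlo ≤ θhi) :
    ∃ πstar : S → A → ℝ, (∀ s, πstar s ∈ stdSimplex ℝ A) ∧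
      (∀ π : S → A → ℝ, (∀ s, π s ∈ stdSimplex ℝ A) →
        Ret lam P r p0 (fun s a => θlo * π s a + (1 - θlo) * πb s a)
          ≤ Ret lam P r p0 (fun s a => θlo * πstar s a + (1 - θlo) * πb s a)) ∧
      (∀ θ' ∈ Set.Icc θlo θhi,
        Ret lam P r p0 (fun s a => θlo * πstar s a + (1 - θlo) * πb s a)
          ≤ Ret lam P r p0 (fun s a => θ' * πstar s a + (1 - θ') * πb s a)) := by
  classical
  by_cases h0 : θlo = 0
  · subst h0
    refine ⟨πb, hπb, ?_, ?_⟩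
    · intro π hπ
      have h1 : (fun s a => (0:ℝ) * π s a + (1 - 0) * πb s a)
          = (fun s a => (0:ℝ) * πb s a + (1 - 0) * πb s a) := by funext s a; ring
      rw [h1]
    · intro θ' hθ'
      have h1 : (fun s a => θ' * πb s a + (1 - θ') * πb s a)
          = (fun s a => (0:ℝ) * πb s a + (1 - 0) * πb s a) := by funext s a; ring
      rw [h1]
  · have hθpos : 0 < θlo := lt_of_le_of_ne hθlo.1 (Ne.symm h0)
    -- effective-policy membership helper
    have heff : ∀ (π : S → A → ℝ), (∀ s, π s ∈ stdSimplex ℝ A) → ∀ θ ∈ Set.Icc (0:ℝ) 1,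
        ∀ s, (fun a => θ * π s a + (1 - θ) * πb s a) ∈ stdSimplex ℝ A :=
      fun π hπ θ hθ s => eff_mem hθ.1 hθ.2 hπ hπb s
    -- pick a deterministic recommendation maximizing the total value at θlo
    obtain ⟨dstar, -, hdmax⟩ := Finset.exists_max_image Finset.univ
      (fun d : S → A => ∑ s, Vp lam P r (fun s a => θlo * ind d s a + (1 - θlo) * πb s a) s)
      Finset.univ_nonempty
    set πstar : S → A → ℝ := ind dstar with hπstar
    have hπs : ∀ s, πstar s ∈ stdSimplex ℝ A := ind_mem dstar
    set w : S → ℝ := Vp lam P r (fun s a => θlo * πstar s a + (1 - θlo) * πb s a) with hw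
    have heffs : ∀ s, (fun a => θlo * πstar s a + (1 - θlo) * πb s a) ∈ stdSimplex ℝ A :=
      heff πstar hπs θlo hθlo
    -- fixed point of w
    have hfix : ∀ s, w s = θlo * Tdet lam P r (dstar s) w s + (1 - θlo) * Tpol lam P r πb w s := by
      intro s
      rw [hw]
      calc Vp lam P r (fun s a => θlo * πstar s a + (1 - θlo) * πb s a) s
          = Tpol lam P r (fun s a => θlo * πstar s a + (1 - θlo) * πb s a)
              (Vp lam P r (fun s a => θlo * πstar s a + (1 - θlo) * πb s a)) s :=
            Vp_fix hl0 hl1 hP heffs s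
        _ = _ := by rw [Tpol_convex, hπstar, Tpol_ind]
    -- Bellman optimality of dstar
    have hbell : ∀ s a, θlo * Tdet lam P r a w s + (1 - θlo) * Tpol lam P r πb w s ≤ w s := by
      by_contra hcon
      push_neg at hcon
      obtain ⟨s0, a0, hgt⟩ := hcon
      set d' : S → A := Function.update dstar s0 a0 with hd'
      have heffd' : ∀ s, (fun a => θlo * ind d' s a + (1 - θlo) * πb s a) ∈ stdSimplex ℝ A :=
        heff (ind d') (ind_mem d') θlo hθlo
      set w' : S → ℝ := Vp lam P r (fun s a => θlo * ind d' s a + (1 - θlo) * πb s a) with hw'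
      have hTd' : ∀ s, Tpol lam P r (fun s a => θlo * ind d' s a + (1 - θlo) * πb s a) w s
          = θlo * Tdet lam P r (d' s) w s + (1 - θlo) * Tpol lam P r πb w s := by
        intro s; rw [Tpol_convex, Tpol_ind]
      have hge : ∀ s, w s ≤ Tpol lam P r (fun s a => θlo * ind d' s a + (1 - θlo) * πb s a) w s := by
        intro s
        rw [hTd' s]
        by_cases hs : s = s0
        · rw [hs, show d' s0 = a0 from Function.update_self s0 a0 dstar]
          exact le_of_lt hgt
        · have : d' s = dstar s := Function.update_of_ne hs a0 dstar
          rw [this, ← hfix s]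
      have hle' : ∀ s, w s ≤ w' s :=
        le_Vp hl0 hl1 hP heffd' w hge
      have hstrict : w s0 < w' s0 := by
        have h1 : w' s0 = Tpol lam P r (fun s a => θlo * ind d' s a + (1 - θlo) * πb s a) w' s0 :=
          Vp_fix hl0 hl1 hP heffd' s0
        have h2 : Tpol lam P r (fun s a => θlo * ind d' s a + (1 - θlo) * πb s a) w s0
            ≤ Tpol lam P r (fun s a => θlo * ind d' s a + (1 - θlo) * πb s a) w' s0 :=
          Tpol_mono hP hl0 heffd' hle' s0
        have h3 : w s0 < Tpol lam P r (fun s a => θlo * ind d' s a + (1 - θlo) * πb s a) w s0 := by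
          rw [hTd' s0]
          have : d' s0 = a0 := Function.update_self s0 a0 dstar
          rw [this]
          exact hgt
        linarith
      have hsum : ∑ s, w s < ∑ s, w' s :=
        Finset.sum_lt_sum (fun s _ => hle' s) ⟨s0, Finset.mem_univ s0, hstrict⟩
      exact absurd (hdmax d' (Finset.mem_univ d')) (not_le.mpr hsum)
    -- optimality over stochastic recommendations
    have hopt_pt : ∀ (π : S → A → ℝ), (∀ s, π s ∈ stdSimplex ℝ A) →
        ∀ s, Tpol lam P r (fun s a => θlo * π s a + (1 - θlo) * πb s a) w s ≤ w s := by
      intro π hπ s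
      have hsum1 : ∑ a, π s a = 1 := (hπ s).2
      calc Tpol lam P r (fun s a => θlo * π s a + (1 - θlo) * πb s a) w s
          = θlo * (∑ a, π s a * Tdet lam P r a w s)
              + (1 - θlo) * ((∑ a, π s a) * Tpol lam P r πb w s) := by
            rw [Tpol_convex, Tpol_eq_sum, hsum1, one_mul]
        _ = ∑ a, π s a * (θlo * Tdet lam P r a w s + (1 - θlo) * Tpol lam P r πb w s) := by
            rw [Finset.mul_sum, Finset.sum_mul, Finset.mul_sum, ← Finset.sum_add_distrib]
            exact Finset.sum_congr rfl fun a _ => by ring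
        _ ≤ ∑ a, π s a * w s :=
            Finset.sum_le_sum fun a _ => mul_le_mul_of_nonneg_left (hbell s a) ((hπ s).1 a)
        _ = w s := by rw [← Finset.sum_mul, hsum1, one_mul]
    refine ⟨πstar, hπs, ?_, ?_⟩
    · intro π hπ
      refine Ret_mono hl0 hl1 hP hp0 (heff π hπ θlo hθlo) heffs ?_
      intro s
      exact Vp_le hl0 hl1 hP (heff π hπ θlo hθlo) w (hopt_pt π hπ) s
    · intro θ' hθ'
      have hθ'01 : θ' ∈ Set.Icc (0:ℝ) 1 := ⟨le_trans hθlo.1 hθ'.1, le_trans hθ'.2 hθhi.2⟩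
      -- T^{πb} w ≤ w
      have hb_le : ∀ s, Tpol lam P r πb w s ≤ w s := by
        intro s
        have h1 := hopt_pt πb hπb s
        have h2 : Tpol lam P r (fun s a => θlo * πb s a + (1 - θlo) * πb s a) w s
            = θlo * Tpol lam P r πb w s + (1 - θlo) * Tpol lam P r πb w s := Tpol_convex _ _ _ _
        rw [h2] at h1
        linarith
      have hup : ∀ s, w s ≤ Tpol lam P r (fun s a => θ' * πstar s a + (1 - θ') * πb s a) w s := by
        intro s
        rw [Tpol_convex, hπstar]
        have hfx := hfix s
        rw [← Tpol_ind (lam := lam) (P := P) (r := r) dstar w s] at hfx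
        set a1 := Tpol lam P r (ind dstar) w s
        set b1 := Tpol lam P r πb w s
        have hb := hb_le s
        have hab : b1 ≤ a1 := by nlinarith
        have h1 := hθ'.1
        nlinarith [mul_nonneg (sub_nonneg.mpr h1) (sub_nonneg.mpr hab)]
      refine Ret_mono hl0 hl1 hP hp0 heffs (heff πstar hπs θ' hθ'01) ?_
      intro s
      exact le_Vp hl0 hl1 hP (heff πstar hπs θ' hθ'01) w hup s

end Part3
/-- Robust adherence-aware MDP with uncertain adherence level in `[θ_lo, θ_hi]`:
the worst case is always attained at the lowest adherence level `θ_lo`, and an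
optimal recommendation at `θ_lo`, together with `θ_lo`, forms a saddle point. -/
theorem stmt17 {S A : Type*} [Fintype S] [Fintype A] [Nonempty S] [Nonempty A]
    [DecidableEq S]
    (lam : ℝ) (hlam : lam ∈ Set.Ico (0:ℝ) 1)
    (P : S → A → S → ℝ) (hP : ∀ s a, P s a ∈ stdSimplex ℝ S)
    (r : S → A → S → ℝ)
    (p0 : S → ℝ) (hp0 : p0 ∈ stdSimplex ℝ S)
    (πb : S → A → ℝ) (hπb : ∀ s, πb s ∈ stdSimplex ℝ A)
    (θlo θhi : ℝ) (hθlo : θlo ∈ Set.Icc (0:ℝ) 1) (hθhi : θhi ∈ Set.Icc (0:ℝ) 1)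
    (hle : θlo ≤ θhi) :
    (sSup {x : ℝ | ∃ π : S → A → ℝ, (∀ s, π s ∈ stdSimplex ℝ A) ∧
        x = sInf {y : ℝ | ∃ θ' ∈ Set.Icc θlo θhi,
          y = Ret lam P r p0 (fun s a => θ' * π s a + (1 - θ') * πb s a)}}
      = sSup {x : ℝ | ∃ π : S → A → ℝ, (∀ s, π s ∈ stdSimplex ℝ A) ∧
        x = Ret lam P r p0 (fun s a => θlo * π s a + (1 - θlo) * πb s a)}) ∧
    ∃ πstar : S → A → ℝ, (∀ s, πstar s ∈ stdSimplex ℝ A) ∧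
      -- `πstar` is an optimal recommendation at adherence level `θlo` …
      (∀ π : S → A → ℝ, (∀ s, π s ∈ stdSimplex ℝ A) →
        Ret lam P r p0 (fun s a => θlo * π s a + (1 - θlo) * πb s a)
          ≤ Ret lam P r p0 (fun s a => θlo * πstar s a + (1 - θlo) * πb s a)) ∧
      -- … and `(πstar, θlo)` is a saddle point of the robust problem.
      (∀ θ' ∈ Set.Icc θlo θhi,
        Ret lam P r p0 (fun s a => θlo * πstar s a + (1 - θlo) * πb s a)
          ≤ Ret lam P r p0 (fun s a => θ' * πstar s a + (1 - θ') * πb s a)) := by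
  classical
  open Stmt17A in
  obtain ⟨hl0, hl1⟩ := hlam
  obtain ⟨πstar, hπs, hopt, hmono⟩ := auxmain hl0 hl1 hP r hp0 hπb hθlo hθhi hle
  refine ⟨?_, πstar, hπs, hopt, hmono⟩
  have hIcc01 : ∀ θ' ∈ Set.Icc θlo θhi, θ' ∈ Set.Icc (0:ℝ) 1 := fun θ' h =>
    ⟨le_trans hθlo.1 h.1, le_trans h.2 hθhi.2⟩
  have hLB : ∀ (π : S → A → ℝ), (∀ s, π s ∈ stdSimplex ℝ A) → ∀ θ' ∈ Set.Icc θlo θhi,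
      -((1 - lam)⁻¹ * rbd r)
        ≤ Ret lam P r p0 (fun s a => θ' * π s a + (1 - θ') * πb s a) := by
    intro π hπ θ' hθ'
    exact Ret_lb hl0 hl1 hP hp0
      (fun s => eff_mem (hIcc01 θ' hθ').1 (hIcc01 θ' hθ').2 hπ hπb s)
  have hbdd : ∀ (π : S → A → ℝ), (∀ s, π s ∈ stdSimplex ℝ A) →
      BddBelow {y : ℝ | ∃ θ' ∈ Set.Icc θlo θhi,
        y = Ret lam P r p0 (fun s a => θ' * π s a + (1 - θ') * πb s a)} := by
    intro π hπ
    refine ⟨-((1 - lam)⁻¹ * rbd r), ?_⟩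
    rintro y ⟨θ', hθ', rfl⟩
    exact hLB π hπ θ' hθ'
  have hmemlo : ∀ (π : S → A → ℝ),
      Ret lam P r p0 (fun s a => θlo * π s a + (1 - θlo) * πb s a)
        ∈ {y : ℝ | ∃ θ' ∈ Set.Icc θlo θhi,
            y = Ret lam P r p0 (fun s a => θ' * π s a + (1 - θ') * πb s a)} :=
    fun π => ⟨θlo, ⟨le_refl θlo, hle⟩, rfl⟩
  -- the elements of the robust set are bounded by Vstar
  have hrob_le : ∀ (π : S → A → ℝ), (∀ s, π s ∈ stdSimplex ℝ A) →
      sInf {y : ℝ | ∃ θ' ∈ Set.Icc θlo θhi,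
        y = Ret lam P r p0 (fun s a => θ' * π s a + (1 - θ') * πb s a)}
      ≤ Ret lam P r p0 (fun s a => θlo * πstar s a + (1 - θlo) * πb s a) := by
    intro π hπ
    exact le_trans (csInf_le (hbdd π hπ) (hmemlo π)) (hopt π hπ)
  have hRHS : sSup {x : ℝ | ∃ π : S → A → ℝ, (∀ s, π s ∈ stdSimplex ℝ A) ∧
        x = Ret lam P r p0 (fun s a => θlo * π s a + (1 - θlo) * πb s a)}
      = Ret lam P r p0 (fun s a => θlo * πstar s a + (1 - θlo) * πb s a) := by
    apply le_antisymm
    · refine csSup_le ⟨_, πstar, hπs, rfl⟩ ?_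
      rintro x ⟨π, hπ, rfl⟩
      exact hopt π hπ
    · refine le_csSup ⟨Ret lam P r p0 (fun s a => θlo * πstar s a + (1 - θlo) * πb s a), ?_⟩
        ⟨πstar, hπs, rfl⟩
      rintro x ⟨π, hπ, rfl⟩
      exact hopt π hπ
  rw [hRHS]
  apply le_antisymm
  · refine csSup_le ⟨_, πstar, hπs, rfl⟩ ?_
    rintro x ⟨π, hπ, rfl⟩
    exact hrob_le π hπ
  · have heq : sInf {y : ℝ | ∃ θ' ∈ Set.Icc θlo θhi,
        y = Ret lam P r p0 (fun s a => θ' * πstar s a + (1 - θ') * πb s a)}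
        = Ret lam P r p0 (fun s a => θlo * πstar s a + (1 - θlo) * πb s a) := by
      apply le_antisymm
      · exact csInf_le (hbdd πstar hπs) (hmemlo πstar)
      · refine le_csInf ⟨_, θlo, ⟨le_refl θlo, hle⟩, rfl⟩ ?_
        rintro y ⟨θ', hθ', rfl⟩
        exact hmono θ' hθ'
    refine le_csSup ⟨Ret lam P r p0 (fun s a => θlo * πstar s a + (1 - θlo) * πb s a), ?_⟩
      ⟨πstar, hπs, heq.symm⟩
    rintro x ⟨π, hπ, rfl⟩
    exact hrob_le π hπ
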